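/- Let α, β > 0 with α ≠ β and α + β < 1, and let K be the attractor of {φ₁(x) = αx, φ₂(x) = βx + 1 − β}. If f is a contractive similitude on ℝ with f(K) ⊆ K, then f = φ_{i₁} ∘ ⋯ ∘ φ_{i_n} for some finite word over {1,2}. -/

import Mathlib

/-- Composition `φ_{i₁} ∘ φ_{i₂} ∘ ⋯ ∘ φ_{i_n}` along a finite word. -/
def compWord {ι : Type*} (φ : ι → ℝ → ℝ) (w : List ι) : ℝ → ℝ :=
  w.foldr (fun i g => φ i ∘ g) id

section Aux
variable (α β : ℝ) (K : Set ℝ)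

lemma tme_endpoints (hα : 0 < α) (hβ : 0 < β) (hsum : α + β < 1)
    (hKc : IsCompact K) (hKne : K.Nonempty)
    (hmem : ∀ x, x ∈ K ↔ (∃ y ∈ K, x = α*y) ∨ (∃ y ∈ K, x = β*y + 1 - β)) :
    (0:ℝ) ∈ K ∧ (1:ℝ) ∈ K ∧ K ⊆ Set.Icc 0 1 := by
  have hbdd := hKc.bddBelow
  have hbdd' := hKc.bddAbove
  set a := sInf K with ha
  set b := sSup K with hb
  have haK : a ∈ K := hKc.sInf_mem hKne
  have hbK : b ∈ K := hKc.sSup_mem hKne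
  have hlb : ∀ x ∈ K, a ≤ x := fun x hx => csInf_le hbdd hx
  have hub : ∀ x ∈ K, x ≤ b := fun x hx => le_csSup hbdd' hx
  have h1 : α * a ∈ K := (hmem _).2 (Or.inl ⟨a, haK, rfl⟩)
  have h2 : β * b + 1 - β ∈ K := (hmem _).2 (Or.inr ⟨b, hbK, rfl⟩)
  have ha0 : a ≤ 0 := by nlinarith [hlb _ h1]
  have hb1 : 1 ≤ b := by nlinarith [hub _ h2]
  have ha' : a = 0 := by
    rcases (hmem a).1 haK with ⟨y, hy, hay⟩ | ⟨y, hy, hay⟩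
    · nlinarith [hlb _ hy]
    · nlinarith [hlb _ hy]
  have hb' : b = 1 := by
    rcases (hmem b).1 hbK with ⟨y, hy, hby⟩ | ⟨y, hy, hby⟩
    · nlinarith [hub _ hy]
    · nlinarith [hub _ hy]
  exact ⟨ha' ▸ haK, hb' ▸ hbK, fun x hx => ⟨ha' ▸ hlb x hx, hb' ▸ hub x hx⟩⟩

variable (hα : 0 < α) (hβ : 0 < β) (hsum : α + β < 1)
    (h01 : K ⊆ Set.Icc 0 1) (h0K : (0:ℝ) ∈ K) (h1K : (1:ℝ) ∈ K)
    (hmem : ∀ x, x ∈ K ↔ (∃ y ∈ K, x = α*y) ∨ (∃ y ∈ K, x = β*y + 1 - β))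

include hα hβ hsum h01 hmem in
lemma tme_pieces : ∀ x ∈ K, x ≤ α ∨ 1 - β ≤ x := by
  intro x hx
  rcases (hmem x).1 hx with ⟨y, hy, hxy⟩ | ⟨y, hy, hxy⟩
  · left; nlinarith [(h01 hy).2]
  · right; nlinarith [(h01 hy).1]

include hα hβ hsum h01 h0K h1K hmem in
lemma tme_gap_aux (n : ℕ) :
    ∀ c d : ℝ, 0 ≤ c → d ≤ 1 → (∀ x ∈ K, x ∉ Set.Ioo c d) →
      d - c ≤ max (1 - α - β) ((max α β)^n) := by
  induction n with
  | zero =>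
    intro c d hc hd _
    exact le_max_of_le_right (by simp; linarith)
  | succ n ih =>
    intro c d hc hd havoid
    set m := max α β with hm
    have hm0 : 0 < m := lt_max_of_lt_left hα
    have hαm : α ≤ m := le_max_left _ _
    have hβm : β ≤ m := le_max_right _ _
    have hgap0 : (0:ℝ) < 1 - α - β := by linarith
    by_cases hcd : d ≤ c
    · exact le_max_of_le_left (by linarith)
    push_neg at hcd
    have hαK : α ∈ K := (hmem α).2 (Or.inl ⟨1, h1K, by ring⟩)
    have hβK : (1 - β : ℝ) ∈ K := (hmem (1-β)).2 (Or.inr ⟨0, h0K, by ring⟩)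
    have hαdich : α ≤ c ∨ d ≤ α := by
      by_contra h; push_neg at h
      exact havoid α hαK ⟨h.1, h.2⟩
    have hβdich : (1-β) ≤ c ∨ d ≤ 1 - β := by
      by_contra h; push_neg at h
      exact havoid (1-β) hβK ⟨h.1, h.2⟩
    have key : ∀ B : ℝ, 0 ≤ B → ∀ γ : ℝ, 0 < γ → γ ≤ m → γ ≤ 1 →
        γ * max (1-α-β) B ≤ max (1-α-β) (m * B) := by
      intro B hB γ hγ0 hγm hγ1
      rcases le_total (1-α-β) B with h | h
      · rw [max_eq_right h]
        exact le_max_of_le_right (mul_le_mul hγm le_rfl hB (le_of_lt hm0))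
      · rw [max_eq_left h]
        refine le_max_of_le_left ?_
        nlinarith
    have hmpow : (0:ℝ) ≤ m^n := by positivity
    rcases hαdich with hαc | hdα
    · rcases hβdich with hβc | hdβ
      · -- 1-β ≤ c : scale by 1/β
        have h0 : 0 ≤ (c - (1-β))/β := by
          apply div_nonneg _ (le_of_lt hβ); linarith
        have h1' : (d - (1-β))/β ≤ 1 := by
          rw [div_le_one hβ]; linarith
        have havoid' : ∀ x ∈ K, x ∉ Set.Ioo ((c-(1-β))/β) ((d-(1-β))/β) := by
          rintro x hx ⟨hx1, hx2⟩
          have hxm : β * x + 1 - β ∈ K := (hmem _).2 (Or.inr ⟨x, hx, rfl⟩)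
          rw [div_lt_iff₀ hβ] at hx1
          rw [lt_div_iff₀ hβ] at hx2
          exact havoid _ hxm ⟨by nlinarith, by nlinarith⟩
        have hih := ih ((c-(1-β))/β) ((d-(1-β))/β) h0 h1' havoid'
        have h2 : d - c = β * ((d-(1-β))/β - (c-(1-β))/β) := by
          field_simp
          ring
        rw [h2]
        calc β * ((d-(1-β))/β - (c-(1-β))/β) ≤ β * max (1-α-β) (m^n) :=
              mul_le_mul_of_nonneg_left hih (le_of_lt hβ)
          _ ≤ max (1-α-β) (m * m^n) := key (m^n) hmpow β hβ hβm (by linarith)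
          _ = max (1-α-β) (m^(n+1)) := by rw [pow_succ, mul_comm (m^n) m]
      · exact le_max_of_le_left (by linarith)
    · -- d ≤ α : scale by 1/α
      have h0 : 0 ≤ c / α := div_nonneg hc (le_of_lt hα)
      have h1' : d / α ≤ 1 := by rw [div_le_one hα]; linarith
      have havoid' : ∀ x ∈ K, x ∉ Set.Ioo (c/α) (d/α) := by
        rintro x hx ⟨hx1, hx2⟩
        have hxm : α * x ∈ K := (hmem _).2 (Or.inl ⟨x, hx, rfl⟩)
        rw [div_lt_iff₀ hα] at hx1
        rw [lt_div_iff₀ hα] at hx2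
        exact havoid _ hxm ⟨by nlinarith, by nlinarith⟩
      have hih := ih (c/α) (d/α) h0 h1' havoid'
      have h2 : d - c = α * (d/α - c/α) := by field_simp
      rw [h2]
      calc α * (d/α - c/α) ≤ α * max (1-α-β) (m^n) :=
            mul_le_mul_of_nonneg_left hih (le_of_lt hα)
        _ ≤ max (1-α-β) (m * m^n) := key (m^n) hmpow α hα hαm (by linarith)
        _ = max (1-α-β) (m^(n+1)) := by rw [pow_succ, mul_comm (m^n) m]

include hα hβ hsum h01 h0K h1K hmem in
lemma tme_gap :
    ∀ c d : ℝ, 0 ≤ c → d ≤ 1 → (∀ x ∈ K, x ∉ Set.Ioo c d) →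
      d - c ≤ 1 - α - β := by
  intro c d hc hd havoid
  by_contra h
  push_neg at h
  have hm0 : 0 ≤ max α β := le_of_lt (lt_max_of_lt_left hα)
  have hm1 : max α β < 1 := max_lt (by linarith) (by linarith)
  obtain ⟨n, hn⟩ := exists_pow_lt_of_lt_one (by linarith : (0:ℝ) < d - c) hm1
  have := tme_gap_aux α β K hα hβ hsum h01 h0K h1K hmem n c d hc hd havoid
  have : d - c ≤ max (1-α-β) ((max α β)^n) := this
  rcases max_cases (1-α-β) ((max α β)^n) with ⟨he, _⟩ | ⟨he, _⟩ <;> rw [he] at this <;> linarith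

include hα hβ hsum h01 h0K h1K hmem in
lemma tme_gap_unique :
    ∀ c d : ℝ, 0 ≤ c → d ≤ 1 → (∀ x ∈ K, x ∉ Set.Ioo c d) →
      1 - α - β ≤ d - c → c = α ∧ d = 1 - β := by
  intro c d hc hd havoid hlen
  have hgap := tme_gap α β K hα hβ hsum h01 h0K h1K hmem
  have hαK : α ∈ K := (hmem α).2 (Or.inl ⟨1, h1K, by ring⟩)
  have hβK : (1 - β : ℝ) ∈ K := (hmem (1-β)).2 (Or.inr ⟨0, h0K, by ring⟩)
  have hcd : c < d := by linarith
  have hαdich : α ≤ c ∨ d ≤ α := by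
    by_contra h; push_neg at h
    exact havoid α hαK ⟨h.1, h.2⟩
  have hβdich : (1-β) ≤ c ∨ d ≤ 1 - β := by
    by_contra h; push_neg at h
    exact havoid (1-β) hβK ⟨h.1, h.2⟩
  rcases hαdich with hαc | hdα
  · rcases hβdich with hβc | hdβ
    · -- 1-β ≤ c : contradiction by scaling
      exfalso
      have h0 : 0 ≤ (c - (1-β))/β := by
        apply div_nonneg _ (le_of_lt hβ); linarith
      have h1' : (d - (1-β))/β ≤ 1 := by rw [div_le_one hβ]; linarith
      have havoid' : ∀ x ∈ K, x ∉ Set.Ioo ((c-(1-β))/β) ((d-(1-β))/β) := by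
        rintro x hx ⟨hx1, hx2⟩
        have hxm : β * x + 1 - β ∈ K := (hmem _).2 (Or.inr ⟨x, hx, rfl⟩)
        rw [div_lt_iff₀ hβ] at hx1
        rw [lt_div_iff₀ hβ] at hx2
        exact havoid _ hxm ⟨by nlinarith, by nlinarith⟩
      have := hgap _ _ h0 h1' havoid'
      have hβ1 : β < 1 := by linarith
      have : d - c ≤ β * (1 - α - β) := by
        have hexp : (d-(1-β))/β - (c-(1-β))/β = (d-c)/β := by field_simp; ring
        rw [hexp] at this
        rw [div_le_iff₀ hβ] at this
        linarith [this]
      nlinarith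
    · constructor <;> linarith
  · -- d ≤ α : contradiction by scaling
    exfalso
    have h0 : 0 ≤ c / α := div_nonneg hc (le_of_lt hα)
    have h1' : d / α ≤ 1 := by rw [div_le_one hα]; linarith
    have havoid' : ∀ x ∈ K, x ∉ Set.Ioo (c/α) (d/α) := by
      rintro x hx ⟨hx1, hx2⟩
      have hxm : α * x ∈ K := (hmem _).2 (Or.inl ⟨x, hx, rfl⟩)
      rw [div_lt_iff₀ hα] at hx1
      rw [lt_div_iff₀ hα] at hx2
      exact havoid _ hxm ⟨by nlinarith, by nlinarith⟩
    have := hgap _ _ h0 h1' havoid'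
    have hα1 : α < 1 := by linarith
    have : d - c ≤ α * (1 - α - β) := by
      have hexp : d/α - c/α = (d-c)/α := by field_simp
      rw [hexp, div_le_iff₀ hα] at this
      linarith
    nlinarith

include hα hβ hsum h01 h0K h1K hmem in
lemma tme_no_reflection (hne : α ≠ β) :
    ∀ c : ℝ, (∀ x ∈ K, -x + c ∈ K) → False := by
  intro c hmap
  have hc1 : c = 1 := by
    have h0 := hmap 0 h0K
    have h1 := hmap 1 h1K
    have := (h01 h0).2
    have := (h01 h1).1
    simp at *
    linarith
  subst hc1
  have hpieces := tme_pieces α β K hα hβ hsum h01 hmem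
  have havoid : ∀ x ∈ K, x ∉ Set.Ioo β (1-α) := by
    rintro x hx ⟨hx1, hx2⟩
    have hxm : -x + 1 ∈ K := hmap x hx
    rcases hpieces _ hxm with h | h <;> linarith
  have := tme_gap_unique α β K hα hβ hsum h01 h0K h1K hmem β (1-α)
    (le_of_lt hβ) (by linarith) havoid (by linarith)
  exact hne this.1.symm

include hα hβ hsum h01 h0K h1K hmem in
lemma tme_piece_dichotomy (r t : ℝ) (hr0 : r ≠ 0) (hr1 : |r| < 1)
    (hmap : ∀ x ∈ K, r * x + t ∈ K) :
    (∀ x ∈ K, r * x + t ≤ α) ∨ (∀ x ∈ K, 1 - β ≤ r * x + t) := by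
  have hpieces := tme_pieces α β K hα hβ hsum h01 hmem
  by_contra h
  push_neg at h
  obtain ⟨⟨p, hp, hp'⟩, ⟨q, hq, hq'⟩⟩ := h
  -- r*p+t > α hence ≥ 1-β ; r*q+t < 1-β hence ≤ α
  have hpK := hmap p hp
  have hqK := hmap q hq
  have hp2 : 1 - β ≤ r * p + t := by
    rcases hpieces _ hpK with h | h
    · linarith
    · exact h
  have hq2 : r * q + t ≤ α := by
    rcases hpieces _ hqK with h | h
    · exact h
    · linarith
  have hgap := tme_gap α β K hα hβ hsum h01 h0K h1K hmem
  have hgap0 : (0:ℝ) < 1 - α - β := by linarith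
  rcases lt_or_gt_of_ne hr0 with hrneg | hrpos
  · -- r < 0
    have hrabs : -r < 1 := by rw [abs_of_neg hrneg] at hr1; exact hr1
    set c := (1 - β - t)/r with hcdef
    set d := (α - t)/r with hddef
    have hc0 : 0 ≤ c := by
      have : p ≤ c := by
        rw [hcdef, le_div_iff_of_neg hrneg]; linarith
      linarith [(h01 hp).1]
    have hd1 : d ≤ 1 := by
      have : d ≤ q := by
        rw [hddef, div_le_iff_of_neg hrneg]; linarith
      linarith [(h01 hq).2]
    have havoid : ∀ x ∈ K, x ∉ Set.Ioo c d := by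
      rintro x hx ⟨hx1, hx2⟩
      rw [hcdef, div_lt_iff_of_neg hrneg] at hx1
      rw [hddef, lt_div_iff_of_neg hrneg] at hx2
      have hxm := hmap x hx
      rcases hpieces _ hxm with h | h <;> linarith
    have := hgap c d hc0 hd1 havoid
    have hdc : (-r) * (d - c) = 1 - α - β := by
      rw [hcdef, hddef]
      field_simp
      ring
    nlinarith
  · -- r > 0
    have hrabs : r < 1 := by rw [abs_of_pos hrpos] at hr1; exact hr1
    set c := (α - t)/r with hcdef
    set d := (1 - β - t)/r with hddef
    have hc0 : 0 ≤ c := by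
      have : q ≤ c := by
        rw [hcdef, le_div_iff₀ hrpos]; linarith
      linarith [(h01 hq).1]
    have hd1 : d ≤ 1 := by
      have : d ≤ p := by
        rw [hddef, div_le_iff₀ hrpos]; linarith
      linarith [(h01 hp).2]
    have havoid : ∀ x ∈ K, x ∉ Set.Ioo c d := by
      rintro x hx ⟨hx1, hx2⟩
      rw [hcdef, div_lt_iff₀ hrpos] at hx1
      rw [hddef, lt_div_iff₀ hrpos] at hx2
      have hxm := hmap x hx
      rcases hpieces _ hxm with h | h <;> linarith
    have := hgap c d hc0 hd1 havoid
    have hdc : r * (d - c) = 1 - α - β := by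
      rw [hcdef, hddef]
      field_simp
      ring
    nlinarith

end Aux

lemma compWord_nil {ι : Type*} (φ : ι → ℝ → ℝ) (x : ℝ) : compWord φ [] x = x := rfl

lemma compWord_cons {ι : Type*} (φ : ι → ℝ → ℝ) (i : ι) (w : List ι) (x : ℝ) :
    compWord φ (i :: w) x = φ i (compWord φ w x) := rfl

section Main
variable (α β : ℝ) (K : Set ℝ)
    (hα : 0 < α) (hβ : 0 < β) (hne : α ≠ β) (hsum : α + β < 1)
    (h01 : K ⊆ Set.Icc 0 1) (h0K : (0:ℝ) ∈ K) (h1K : (1:ℝ) ∈ K)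
    (hmem : ∀ x, x ∈ K ↔ (∃ y ∈ K, x = α*y) ∨ (∃ y ∈ K, x = β*y + 1 - β))
    (φ : Fin 2 → ℝ → ℝ)
    (hφ1 : ∀ x, φ 0 x = α * x) (hφ2 : ∀ x, φ 1 x = β * x + 1 - β)

include hα hβ hne hsum h01 h0K h1K hmem hφ1 hφ2 in
lemma tme_main : ∀ n : ℕ, ∀ r t : ℝ, (max α β)^n < |r| → |r| < 1 →
    (∀ x ∈ K, r * x + t ∈ K) →
    ∃ w : List (Fin 2), ∀ x : ℝ, r * x + t = compWord φ w x := by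
  intro n
  induction n with
  | zero =>
    intro r t hrn hr1 _
    rw [pow_zero] at hrn
    linarith
  | succ n ih =>
    intro r t hrn hr1 hmap
    set m := max α β with hm
    have hαm : α ≤ m := le_max_left _ _
    have hβm : β ≤ m := le_max_right _ _
    have hmpow : (0:ℝ) ≤ m^n := by positivity
    have hr0 : r ≠ 0 := by
      intro h
      rw [h] at hrn
      simp at hrn
      have : (0:ℝ) ≤ m^(n+1) := by positivity
      linarith
    have hT := h1K
    rcases tme_piece_dichotomy α β K hα hβ hsum h01 h0K h1K hmem r t hr0 hr1 hmap
      with hL | hR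
    · -- left piece : f(K) ⊆ [0, α], factor through φ 0
      have hbnd : ∀ x ∈ K, 0 ≤ r * x + t := fun x hx => (h01 (hmap x hx)).1
      have ht0 : 0 ≤ t := by have := hbnd 0 h0K; simpa using this
      have htα : t ≤ α := by have := hL 0 h0K; simpa using this
      have hrt0 : 0 ≤ r + t := by have := hbnd 1 h1K; simpa using this
      have hrtα : r + t ≤ α := by have := hL 1 h1K; simpa using this
      have hrα : |r| ≤ α := abs_le.2 ⟨by linarith, by linarith⟩
      have hg : ∀ x ∈ K, (r/α) * x + t/α ∈ K := by
        intro x hx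
        have hyK := hmap x hx
        have hyα := hL x hx
        rcases (hmem _).1 hyK with ⟨z, hz, hzy⟩ | ⟨z, hz, hzy⟩
        · have : (r/α) * x + t/α = z := by
            have : (r/α) * x + t/α = (r*x+t)/α := by ring
            rw [this, hzy]
            field_simp
          rw [this]; exact hz
        · exfalso
          have := (h01 hz).1
          nlinarith
      rcases eq_or_lt_of_le hrα with heq | hlt
      · -- |r| = α
        rcases abs_eq (le_of_lt hα) |>.1 heq with hre | hre
        · -- r = α : translation, must be identity
          have hc0 : 0 ≤ t/α := by
            have := (h01 (hg 0 h0K)).1; simpa using this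
          have hc1 : t/α ≤ 0 := by
            have h := hg 1 h1K
            have := (h01 h).2
            rw [hre] at this
            have hαα : α/α = 1 := div_self (ne_of_gt hα)
            rw [hαα] at this
            linarith
          have ht : t = 0 := by
            have : t/α = 0 := le_antisymm hc1 hc0
            field_simp at this
            simpa using this
          refine ⟨[0], fun x => ?_⟩
          rw [compWord_cons, compWord_nil, hφ1, hre, ht, add_zero]
        · -- r = -α : reflection, impossible
          exfalso
          apply tme_no_reflection α β K hα hβ hsum h01 h0K h1K hmem hne (t/α)
          intro x hx
          have h := hg x hx
          rw [hre] at h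
          have : -α/α * x + t/α = -x + t/α := by
            field_simp
          rwa [this] at h
      · -- |r| < α : recurse
        have habs : |r/α| = |r|/α := by
          rw [abs_div, abs_of_pos hα]
        have h1' : |r/α| < 1 := by rw [habs, div_lt_one hα]; exact hlt
        have h2' : m^n < |r/α| := by
          rw [habs, lt_div_iff₀ hα]
          calc m^n * α ≤ m^n * m := by nlinarith
            _ = m^(n+1) := by rw [pow_succ]
            _ < |r| := hrn
        obtain ⟨w, hw⟩ := ih (r/α) (t/α) h2' h1' hg
        refine ⟨0 :: w, fun x => ?_⟩
        rw [compWord_cons, ← hw x, hφ1]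
        field_simp
        try ring
    · -- right piece : f(K) ⊆ [1-β, 1], factor through φ 1
      have hbnd : ∀ x ∈ K, r * x + t ≤ 1 := fun x hx => (h01 (hmap x hx)).2
      have ht0 : 1 - β ≤ t := by have := hR 0 h0K; simpa using this
      have htα : t ≤ 1 := by have := hbnd 0 h0K; simpa using this
      have hrt0 : 1 - β ≤ r + t := by have := hR 1 h1K; simpa using this
      have hrtα : r + t ≤ 1 := by have := hbnd 1 h1K; simpa using this
      have hrβ : |r| ≤ β := abs_le.2 ⟨by linarith, by linarith⟩
      have hg : ∀ x ∈ K, (r/β) * x + (t-(1-β))/β ∈ K := by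
        intro x hx
        have hyK := hmap x hx
        have hyβ := hR x hx
        rcases (hmem _).1 hyK with ⟨z, hz, hzy⟩ | ⟨z, hz, hzy⟩
        · exfalso
          have := (h01 hz).2
          nlinarith
        · have : (r/β) * x + (t-(1-β))/β = z := by
            have h' : (r/β) * x + (t-(1-β))/β = (r*x+t-(1-β))/β := by ring
            rw [h', hzy]
            field_simp
            try ring
          rw [this]; exact hz
      rcases eq_or_lt_of_le hrβ with heq | hlt
      · -- |r| = β
        rcases abs_eq (le_of_lt hβ) |>.1 heq with hre | hre
        · -- r = β : translation, must be identity
          have hc0 : 0 ≤ (t-(1-β))/β := by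
            have := (h01 (hg 0 h0K)).1; simpa using this
          have hc1 : (t-(1-β))/β ≤ 0 := by
            have h := hg 1 h1K
            have := (h01 h).2
            rw [hre] at this
            have hββ : β/β = 1 := div_self (ne_of_gt hβ)
            rw [hββ] at this
            linarith
          have ht : t = 1 - β := by
            have h := le_antisymm hc1 hc0
            field_simp at h
            linarith
          refine ⟨[1], fun x => ?_⟩
          rw [compWord_cons, compWord_nil, hφ2, hre, ht]
          ring
        · -- r = -β : reflection, impossible
          exfalso
          apply tme_no_reflection α β K hα hβ hsum h01 h0K h1K hmem hne ((t-(1-β))/β)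
          intro x hx
          have h := hg x hx
          rw [hre] at h
          have : -β/β * x + (t-(1-β))/β = -x + (t-(1-β))/β := by
            field_simp
          rwa [this] at h
      · -- |r| < β : recurse
        have habs : |r/β| = |r|/β := by
          rw [abs_div, abs_of_pos hβ]
        have h1' : |r/β| < 1 := by rw [habs, div_lt_one hβ]; exact hlt
        have h2' : m^n < |r/β| := by
          rw [habs, lt_div_iff₀ hβ]
          calc m^n * β ≤ m^n * m := by nlinarith
            _ = m^(n+1) := by rw [pow_succ]
            _ < |r| := hrn
        obtain ⟨w, hw⟩ := ih (r/β) ((t-(1-β))/β) h2' h1' hg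
        refine ⟨1 :: w, fun x => ?_⟩
        rw [compWord_cons, ← hw x, hφ2]
        field_simp
        ring

end Main

theorem two_map_embedding (α β : ℝ) (hα : 0 < α) (hβ : 0 < β) (hne : α ≠ β)
    (hsum : α + β < 1)
    (K : Set ℝ) (hKc : IsCompact K) (hKne : K.Nonempty)
    (φ : Fin 2 → ℝ → ℝ)
    (hφ1 : ∀ x, φ 0 x = α * x) (hφ2 : ∀ x, φ 1 x = β * x + 1 - β)
    (hK : K = φ 0 '' K ∪ φ 1 '' K)
    (r t : ℝ) (hr0 : 0 < |r|) (hr1 : |r| < 1)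
    (hf : (fun x : ℝ => r * x + t) '' K ⊆ K) :
    ∃ w : List (Fin 2), ∀ x : ℝ, r * x + t = compWord φ w x := by
  have hmem : ∀ x, x ∈ K ↔ (∃ y ∈ K, x = α*y) ∨ (∃ y ∈ K, x = β*y + 1 - β) := by
    intro x
    constructor
    · intro hx
      rw [hK] at hx
      rcases hx with ⟨y, hy, hxy⟩ | ⟨y, hy, hxy⟩
      · exact Or.inl ⟨y, hy, by rw [← hxy, hφ1]⟩
      · exact Or.inr ⟨y, hy, by rw [← hxy, hφ2]⟩
    · intro hx
      rw [hK]
      rcases hx with ⟨y, hy, hxy⟩ | ⟨y, hy, hxy⟩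
      · exact Or.inl ⟨y, hy, by rw [hφ1, hxy]⟩
      · exact Or.inr ⟨y, hy, by rw [hφ2, hxy]⟩
  obtain ⟨h0K, h1K, h01⟩ := tme_endpoints α β K hα hβ hsum hKc hKne hmem
  have hm1 : max α β < 1 := max_lt (by linarith) (by linarith)
  obtain ⟨n, hn⟩ := exists_pow_lt_of_lt_one hr0 hm1
  have hmap : ∀ x ∈ K, r * x + t ∈ K := fun x hx => hf ⟨x, hx, rfl⟩
  exact tme_main α β K hα hβ hne hsum h01 h0K h1K hmem φ hφ1 hφ2 n r t hn hr1 hmap
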